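/- Let θ ∈ (0, π/4) and let the leader of a point q be the ray from q in direction (−cos θ, sin θ) — i.e., going up-left with slope −tan θ relative to leftward direction. Let ℓ ∈ ℝ². If p is a point strictly below the leader line of ℓ whose unit-square label can intersect a unit-square label of some point a strictly above the leader line of ℓ and to the 'left' of ℓ (in rotated coordinates), with both labels avoiding ℓ's leader, then p lies in a region of width at most 2 and height at most 1, namely p ∈ (ℓ_x, ℓ_x + 2) × (ℓ_y − 1, ℓ_y) intersected with the half-plane below ℓ's leader line. -/

import Mathlib

/-- The closed axis-aligned unit-square label anchored at its lower-left corner `p`. -/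
def label (p : ℝ × ℝ) : Set (ℝ × ℝ) :=
  {z | p.1 ≤ z.1 ∧ z.1 ≤ p.1 + 1 ∧ p.2 ≤ z.2 ∧ z.2 ≤ p.2 + 1}

/-- The open unit square with lower-left corner `p` (the interior of `label p`). -/
def openSquare (p : ℝ × ℝ) : Set (ℝ × ℝ) :=
  {z | p.1 < z.1 ∧ z.1 < p.1 + 1 ∧ p.2 < z.2 ∧ z.2 < p.2 + 1}

/-- Euclidean distance in the plane. -/
noncomputable def edist2 (p q : ℝ × ℝ) : ℝ :=
  Real.sqrt ((p.1 - q.1) ^ 2 + (p.2 - q.2) ^ 2)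

/-- Horizontal leftward leader ray from `p` (slope θ = 0). -/
def ray0 (p : ℝ × ℝ) : Set (ℝ × ℝ) := {z | z.2 = p.2 ∧ z.1 ≤ p.1}

/-- The open unit square `E(ℓ)` with top-left corner `ℓ`. -/
def Eregion (ℓ : ℝ × ℝ) : Set (ℝ × ℝ) :=
  {z | ℓ.1 < z.1 ∧ z.1 < ℓ.1 + 1 ∧ ℓ.2 - 1 < z.2 ∧ z.2 < ℓ.2}

/-- The region `S(a,b)`: points in the horizontal slab strictly between the heights
of `a` and `b`, strictly left of both. -/
def slabS (a b : ℝ × ℝ) : Set (ℝ × ℝ) :=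
  {q | a.2 < q.2 ∧ q.2 < b.2 ∧ q.1 < a.1 ∧ q.1 < b.1}

set_option maxHeartbeats 800000 in
theorem stmt8 (θ : ℝ) (hθ1 : 0 < θ) (hθ2 : θ < Real.pi / 4) (ℓ p a : ℝ × ℝ)
    (hbelow : p.2 - ℓ.2 < -Real.tan θ * (p.1 - ℓ.1))
    (habove : a.2 - ℓ.2 > -Real.tan θ * (a.1 - ℓ.1))
    (hleft : (a.1 - ℓ.1) * Real.cos θ - (a.2 - ℓ.2) * Real.sin θ < 0)
    (hint : (label p ∩ label a).Nonempty)
    (hpr : ∀ t : ℝ, 0 ≤ t → (ℓ.1 - t * Real.cos θ, ℓ.2 + t * Real.sin θ) ∉ label p)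
    (har : ∀ t : ℝ, 0 ≤ t → (ℓ.1 - t * Real.cos θ, ℓ.2 + t * Real.sin θ) ∉ label a) :
    (ℓ.1 < p.1 ∧ p.1 < ℓ.1 + 2 ∧ ℓ.2 - 1 < p.2 ∧ p.2 < ℓ.2) ∧
      p.2 - ℓ.2 < -Real.tan θ * (p.1 - ℓ.1) := by
  have hpi := Real.pi_pos
  have hc : 0 < Real.cos θ :=
    Real.cos_pos_of_mem_Ioo ⟨by linarith, by linarith⟩
  have ht0 : 0 < Real.tan θ := Real.tan_pos_of_pos_of_lt_pi_div_two hθ1 (by linarith)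
  have ht1 : Real.tan θ < 1 := by
    have := Real.tan_lt_tan_of_nonneg_of_lt_pi_div_two hθ1.le (by linarith) hθ2
    rwa [Real.tan_pi_div_four] at this
  have hs : Real.sin θ = Real.tan θ * Real.cos θ := by
    rw [Real.tan_eq_sin_div_cos]; field_simp
  -- key: the ray misses `label p`, in cartesian form
  have key : ∀ x : ℝ, x ≤ ℓ.1 →
      ¬(p.1 ≤ x ∧ x ≤ p.1 + 1 ∧ p.2 ≤ ℓ.2 + Real.tan θ * (ℓ.1 - x) ∧
        ℓ.2 + Real.tan θ * (ℓ.1 - x) ≤ p.2 + 1) := by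
    intro x hx h
    have hT : 0 ≤ (ℓ.1 - x) / Real.cos θ := div_nonneg (by linarith) hc.le
    apply hpr _ hT
    have h1 : ℓ.1 - (ℓ.1 - x) / Real.cos θ * Real.cos θ = x := by field_simp; ring
    have h2 : ℓ.2 + (ℓ.1 - x) / Real.cos θ * Real.sin θ = ℓ.2 + Real.tan θ * (ℓ.1 - x) := by
      rw [hs]; field_simp
    simp only [label, Set.mem_setOf_eq, h1, h2]
    exact h
  obtain ⟨z, hzp, hza⟩ := hint
  obtain ⟨hzp1, hzp2, hzp3, hzp4⟩ := hzp
  obtain ⟨hza1, hza2, hza3, hza4⟩ := hza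
  have hx1 : a.1 ≤ p.1 + 1 := le_trans hza1 hzp2
  have hx2 : p.1 ≤ a.1 + 1 := le_trans hzp1 hza2
  have hy1 : a.2 ≤ p.2 + 1 := le_trans hza3 hzp4
  have hy2 : p.2 ≤ a.2 + 1 := le_trans hzp3 hza4
  have hleft' : a.1 - ℓ.1 < Real.tan θ * (a.2 - ℓ.2) := by
    rw [hs] at hleft; nlinarith [hc]
  have hv2 : ℓ.2 < a.2 := by
    nlinarith [mul_lt_mul_of_pos_left hleft' ht0, sq_nonneg (Real.tan θ)]
  have hA : ℓ.2 + Real.tan θ * (ℓ.1 - (p.1 + 1)) < p.2 + 1 := by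
    nlinarith [mul_le_mul_of_nonneg_left hx1 ht0.le]
  have hp2a : ℓ.2 - 1 < p.2 := by linarith
  have hp2 : p.2 < ℓ.2 := by
    by_contra h
    push_neg at h
    rcases le_total (p.1 + 1) (ℓ.1 - (p.2 - ℓ.2) / Real.tan θ) with hcase | hcase
    · -- use x = p.1 + 1
      refine key (p.1 + 1) (by nlinarith [div_nonneg (by linarith : (0:ℝ) ≤ p.2 - ℓ.2) ht0.le]) ⟨by linarith, le_refl _, ?_, hA.le⟩
      have : (p.2 - ℓ.2) / Real.tan θ ≤ ℓ.1 - (p.1 + 1) := by linarith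
      have := (div_le_iff₀ ht0).mp this
      nlinarith
    · -- use x = ℓ.1 - (p.2 - ℓ.2)/tan θ
      set x := ℓ.1 - (p.2 - ℓ.2) / Real.tan θ with hxdef
      have hx0 : (0:ℝ) ≤ (p.2 - ℓ.2) / Real.tan θ :=
        div_nonneg (by linarith) ht0.le
      have hxle : x ≤ ℓ.1 := by simp [hxdef]; linarith
      have hy : ℓ.2 + Real.tan θ * (ℓ.1 - x) = p.2 := by
        rw [hxdef, sub_sub_cancel, mul_div_assoc', mul_div_cancel_left₀ _ ht0.ne']; ring
      have hpx : p.1 ≤ x := by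
        have : (p.2 - ℓ.2) / Real.tan θ < ℓ.1 - p.1 := by
          rw [div_lt_iff₀ ht0]; nlinarith [hbelow]
        simp [hxdef]; linarith
      exact key x hxle ⟨hpx, by linarith, by rw [hy], by rw [hy]; linarith⟩
  have hp1 : ℓ.1 < p.1 := by
    by_contra h
    push_neg at h
    rcases le_total (p.1 + 1) ℓ.1 with hcase | hcase
    · refine key (p.1 + 1) hcase ⟨by linarith, le_refl _, ?_, hA.le⟩
      nlinarith [mul_nonneg ht0.le (by linarith : (0:ℝ) ≤ ℓ.1 - (p.1 + 1))]
    · refine key ℓ.1 le_rfl ⟨h, hcase, ?_, ?_⟩ <;> · simp; linarith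
  have hp1' : p.1 < ℓ.1 + 2 := by
    nlinarith [mul_lt_mul_of_pos_right ht1 (by linarith : (0:ℝ) < a.2 - ℓ.2)]
  exact ⟨⟨hp1, hp1', hp2a, hp2⟩, hbelow⟩
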